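/- Assume v(p_{xy}) + v(p_{yx}) ≤ 1 for all distinct x, y ∈ I and initial values v(t_x) = v(¬t_x) = 0 for all x. Let G ⊆ I be the minimal majority-dominant set, i.e., G is nonempty, v(p_{xy}) > 1/2 for every x ∈ G and y ∉ G, and no nonempty proper subset X ⊊ G satisfies v(p_{xy}) > 1/2 for every x ∈ X and y ∈ I \ X. Then the upper revised valuation v* satisfies: v*(¬t_y) > 1/2 for every y ∉ G; v*(¬t_x) ≤ 1/2 for every x ∈ G; and v*(t_y) ≤ 1/2 for every y ∉ G. Consequently every comprehensive prominence winner (every x with v*(t_x) ≥ v*(¬t_x)) belongs to G. -/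
import Mathlib


/-- A valuation for prominence doctrines: degrees of belief for the literals
`t_x` ("x is prominent"), `¬t_x`, and `p_{xy}` ("x is preferable to y", for
distinct `x, y`), under the identification `¬p_{xy} = p_{yx}`. -/
structure PVal (I : Type*) where
  t : I → ℝ
  nt : I → ℝ
  p : I → I → ℝ

/-- Max over a (possibly empty) index set of reals: the empty max is `0`
(note `Real.sSup_empty = 0`). -/
noncomputable def sup0 (S : Set ℝ) : ℝ := sSup S

open Classical in
/-- Min over a (possibly empty) index set of reals: the empty min is `1`. -/
noncomputable def inf1 (S : Set ℝ) : ℝ := if S.Nonempty then sInf S else 1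

/-- The one-step revision operator associated with the comprehensive prominence
doctrine, whose clauses are indexed by (nonempty) subsets `X ⊆ I`:
`⋁_{r ∈ X} t_r ∨ ⋁_{r ∈ X, s ∉ X} p_{sr}`, `¬t_y ∨ ⋁_{r ∈ X, s ∉ X} p_{sr}`
for `y ∉ X`, and `¬t_x ∨ ¬t_y`; the min over an empty index set is `1` and
the max over an empty index set is `0`. -/
noncomputable def Tcp {I : Type*} (v : PVal I) : PVal I where
  t := fun x => max (v.t x)
    (sup0 {a : ℝ | ∃ X : Finset I, x ∈ X ∧
      a = min (inf1 {b : ℝ | ∃ r ∈ X, r ≠ x ∧ b = v.nt r})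
              (inf1 {b : ℝ | ∃ r ∈ X, ∃ s, s ∉ X ∧ b = v.p r s})})
  nt := fun y => max (v.nt y)
    (max (sup0 {a : ℝ | ∃ r, r ≠ y ∧ a = v.t r})
         (sup0 {a : ℝ | ∃ X : Finset I, X.Nonempty ∧ y ∉ X ∧
           a = inf1 {b : ℝ | ∃ r ∈ X, ∃ s, s ∉ X ∧ b = v.p r s}}))
  p := fun u w => max (v.p u w)
    (sup0 {a : ℝ | ∃ X : Finset I, w ∈ X ∧ u ∉ X ∧
      a = min (max (inf1 {b : ℝ | ∃ r ∈ X, b = v.nt r})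
                   (sup0 {b : ℝ | ∃ s, s ∉ X ∧ b = v.t s}))
              (inf1 {b : ℝ | ∃ r ∈ X, ∃ s, s ∉ X ∧ ¬(r = w ∧ s = u) ∧
                b = v.p r s})})

/- Auxiliary lemmas -/

lemma fin_of_mem_range {α : Type*} [Finite α] {S : Set ℝ} (f : α → ℝ)
    (h : ∀ a ∈ S, ∃ x, a = f x) : S.Finite :=
  Set.Finite.subset (Set.finite_range f) (fun a ha => by
    obtain ⟨x, hx⟩ := h a ha; exact ⟨x, hx.symm⟩)

lemma inf1_le {S : Set ℝ} (hS : S.Finite) {a : ℝ} (ha : a ∈ S) : inf1 S ≤ a := by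
  rw [inf1, if_pos ⟨a, ha⟩]; exact csInf_le hS.bddBelow ha

lemma lt_inf1 {S : Set ℝ} (hS : S.Finite) {c : ℝ} (hc : c < 1)
    (h : ∀ b ∈ S, c < b) : c < inf1 S := by
  rw [inf1]; split_ifs with hne
  · exact h _ (hne.csInf_mem hS)
  · exact hc

lemma le_sup0 {S : Set ℝ} (hS : S.Finite) {a : ℝ} (ha : a ∈ S) : a ≤ sup0 S :=
  le_csSup hS.bddAbove ha

lemma sup0_le {S : Set ℝ} {c : ℝ} (hc : 0 ≤ c) (h : ∀ a ∈ S, a ≤ c) : sup0 S ≤ c :=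
  Real.sSup_le h hc

section Inv
set_option linter.unusedSectionVars false
variable {I : Type*} [Fintype I] [DecidableEq I]

lemma finPset (w : PVal I) (X : Finset I) :
    {b : ℝ | ∃ r ∈ X, ∃ s, s ∉ X ∧ b = w.p r s}.Finite := by
  apply fin_of_mem_range (fun rs : I × I => w.p rs.1 rs.2)
  rintro b ⟨r, _, s, _, rfl⟩; exact ⟨(r, s), rfl⟩

lemma finPset' (w : PVal I) (X : Finset I) (u u' : I) :
    {b : ℝ | ∃ r ∈ X, ∃ s, s ∉ X ∧ ¬(r = u ∧ s = u') ∧ b = w.p r s}.Finite := by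
  apply fin_of_mem_range (fun rs : I × I => w.p rs.1 rs.2)
  rintro b ⟨r, _, s, _, _, rfl⟩; exact ⟨(r, s), rfl⟩

lemma finNTset (w : PVal I) (X : Finset I) (x : I) :
    {b : ℝ | ∃ r ∈ X, r ≠ x ∧ b = w.nt r}.Finite := by
  apply fin_of_mem_range w.nt
  rintro b ⟨r, _, _, rfl⟩; exact ⟨r, rfl⟩

lemma finNTset' (w : PVal I) (X : Finset I) :
    {b : ℝ | ∃ r ∈ X, b = w.nt r}.Finite := by
  apply fin_of_mem_range w.nt
  rintro b ⟨r, _, rfl⟩; exact ⟨r, rfl⟩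

/-- The invariant preserved by `Tcp`. -/
def PInv (G : Finset I) (w : PVal I) : Prop :=
  (∀ y ∉ G, w.t y ≤ 1 / 2) ∧
  (2 ≤ G.card → ∀ x, w.t x ≤ 1 / 2) ∧
  (∀ x ∈ G, w.nt x ≤ 1 / 2) ∧
  (∀ X : Finset I, X.Nonempty → ¬(G ⊆ X) →
    ∃ r ∈ X, ∃ s ∈ G, s ∉ X ∧ w.p r s ≤ 1 / 2) ∧
  (∀ r ∈ G, ∀ s ∉ G, 1 / 2 < w.p r s)

lemma pinv_step (G : Finset I) (hGne : G.Nonempty) (w : PVal I)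
    (h : PInv G w) : PInv G (Tcp w) := by
  obtain ⟨P1, P2, P3, P4, P5⟩ := h
  have key_t : ∀ x : I, (x ∉ G ∨ 2 ≤ G.card) → (Tcp w).t x ≤ 1 / 2 := by
    intro x hx
    have hwt : w.t x ≤ 1 / 2 := by
      rcases hx with h | h
      · exact P1 x h
      · exact P2 h x
    refine max_le hwt (sup0_le (by norm_num) ?_)
    rintro a ⟨X, hxX, rfl⟩
    by_contra hgt
    push_neg at hgt
    have hA : 1 / 2 < inf1 {b : ℝ | ∃ r ∈ X, r ≠ x ∧ b = w.nt r} :=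
      lt_of_lt_of_le hgt (min_le_left _ _)
    have hB : 1 / 2 < inf1 {b : ℝ | ∃ r ∈ X, ∃ s, s ∉ X ∧ b = w.p r s} :=
      lt_of_lt_of_le hgt (min_le_right _ _)
    have hGX : G ⊆ X := by
      by_contra hGX
      obtain ⟨r, hr, s, hsG, hsX, hps⟩ := P4 X ⟨x, hxX⟩ hGX
      have := inf1_le (finPset w X) (show w.p r s ∈ _ from ⟨r, hr, s, hsX, rfl⟩)
      linarith
    have hGx : ∀ g ∈ G, g = x := by
      intro g hg
      by_contra hgx
      have := inf1_le (finNTset w X x) (show w.nt g ∈ _ from ⟨g, hGX hg, hgx, rfl⟩)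
      have := P3 g hg
      linarith
    obtain ⟨g, hg⟩ := hGne
    have hxG : x ∈ G := hGx g hg ▸ hg
    rcases hx with h | h
    · exact h hxG
    · have : G = {x} := by
        apply Finset.eq_singleton_iff_unique_mem.2 ⟨hxG, hGx⟩
      rw [this] at h
      simp at h
  refine ⟨fun y hy => key_t y (Or.inl hy), fun h2 x => key_t x (Or.inr h2),
    ?_, ?_, ?_⟩
  · -- nt
    intro x hx
    refine max_le (P3 x hx) (max_le ?_ ?_)
    · refine sup0_le (by norm_num) ?_
      rintro a ⟨r, hrx, rfl⟩
      by_cases hrG : r ∈ G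
      · have h2 : 2 ≤ G.card :=
          Finset.one_lt_card.mpr ⟨x, hx, r, hrG, fun h => hrx (h.symm)⟩
        exact P2 h2 r
      · exact P1 r hrG
    · refine sup0_le (by norm_num) ?_
      rintro a ⟨X, hXne, hxX, rfl⟩
      have hGX : ¬(G ⊆ X) := fun h => hxX (h hx)
      obtain ⟨r, hr, s, _, hsX, hps⟩ := P4 X hXne hGX
      exact le_trans (inf1_le (finPset w X) ⟨r, hr, s, hsX, rfl⟩) hps
  · -- P4
    intro X hXne hGX
    obtain ⟨r, hrX, s, hsG, hsX, hprs⟩ := P4 X hXne hGX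
    refine ⟨r, hrX, s, hsG, hsX, ?_⟩
    refine max_le hprs (sup0_le (by norm_num) ?_)
    rintro a ⟨X', hsX', hrX', rfl⟩
    by_cases hGX' : G ⊆ X'
    · refine le_trans (min_le_left _ _) (max_le ?_ ?_)
      · obtain ⟨g, hg⟩ := hGne
        exact le_trans (inf1_le (finNTset' w X') ⟨g, hGX' hg, rfl⟩) (P3 g hg)
      · refine sup0_le (by norm_num) ?_
        rintro b ⟨s', hs', rfl⟩
        exact P1 s' (fun h => hs' (hGX' h))
    · obtain ⟨r', hr', s', hs'G, hs'X', hp'⟩ := P4 X' ⟨s, hsX'⟩ hGX'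
      by_cases hpair : r' = s ∧ s' = r
      · obtain ⟨rfl, rfl⟩ := hpair
        refine le_trans (min_le_left _ _) (max_le ?_ ?_)
        · exact le_trans (inf1_le (finNTset' w X') ⟨r', hr', rfl⟩) (P3 r' hsG)
        · obtain ⟨g, hg, hgX'⟩ := Finset.not_subset.mp hGX'
          have h2 : 2 ≤ G.card :=
            Finset.one_lt_card.mpr ⟨r', hsG, g, hg, fun h => hgX' (h ▸ hr')⟩
          refine sup0_le (by norm_num) ?_
          rintro b ⟨s'', _, rfl⟩
          exact P2 h2 s''
      · exact le_trans (min_le_right _ _)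
          (le_trans (inf1_le (finPset' w X' s r) ⟨r', hr', s', hs'X', hpair, rfl⟩) hp')
  · -- P5
    intro r hr s hs
    exact lt_of_lt_of_le (P5 r hr s hs) (le_max_left _ _)

end Inv

/-- The minimal majority-dominant set `G` satisfies: `v*(¬t_y) > 1/2` for
`y ∉ G`, `v*(¬t_x) ≤ 1/2` for `x ∈ G`, and `v*(t_y) ≤ 1/2` for `y ∉ G`;
consequently every comprehensive prominence winner belongs to `G`. -/
theorem stmt16 {I : Type*} [Fintype I] [DecidableEq I]
    (hcard : 2 ≤ Fintype.card I)
    (v : PVal I)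
    (hbox : ∀ x y : I, x ≠ y → v.p x y ∈ Set.Icc (0:ℝ) 1)
    (hsum : ∀ x y : I, x ≠ y → v.p x y + v.p y x ≤ 1)
    (ht : ∀ x, v.t x = 0) (hnt : ∀ x, v.nt x = 0)
    (vstar : PVal I) (hstar : ∃ N : ℕ, ∀ n ≥ N, Tcp^[n] v = vstar)
    (G : Finset I) (hGne : G.Nonempty)
    (hGdom : ∀ x ∈ G, ∀ y ∉ G, 1 / 2 < v.p x y)
    (hGmin : ∀ X : Finset I, X.Nonempty → X ⊂ G →
      ¬(∀ x ∈ X, ∀ y ∉ X, 1 / 2 < v.p x y)) :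
    (∀ y ∉ G, 1 / 2 < vstar.nt y) ∧
    (∀ x ∈ G, vstar.nt x ≤ 1 / 2) ∧
    (∀ y ∉ G, vstar.t y ≤ 1 / 2) ∧
    (∀ x : I, vstar.nt x ≤ vstar.t x → x ∈ G) := by
  -- initial invariant
  have hinit : PInv G v := by
    refine ⟨fun y _ => by rw [ht]; norm_num, fun _ x => by rw [ht]; norm_num,
      fun x _ => by rw [hnt]; norm_num, ?_, hGdom⟩
    intro X hXne hGX
    by_cases hXG : (X ∩ G).Nonempty
    · have hYsub : X ∩ G ⊂ G := by
        refine Finset.ssubset_iff_subset_ne.2 ⟨Finset.inter_subset_right, ?_⟩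
        intro h
        obtain ⟨g, hg, hgX⟩ := Finset.not_subset.mp hGX
        have : g ∈ X ∩ G := by rw [h]; exact hg
        exact hgX (Finset.mem_inter.1 this).1
      have hmin := hGmin (X ∩ G) hXG hYsub
      push_neg at hmin
      obtain ⟨r, hr, s, hs, hps⟩ := hmin
      have hrG : r ∈ G := (Finset.mem_inter.1 hr).2
      have hsG : s ∈ G := by
        by_contra hsG
        exact absurd (hGdom r hrG s hsG) (not_lt.2 hps)
      have hsX : s ∉ X := fun h => hs (Finset.mem_inter.2 ⟨h, hsG⟩)
      exact ⟨r, (Finset.mem_inter.1 hr).1, s, hsG, hsX, hps⟩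
    · obtain ⟨r, hr⟩ := hXne
      obtain ⟨g, hg, hgX⟩ := Finset.not_subset.mp hGX
      have hrG : r ∉ G := fun h => hXG ⟨r, Finset.mem_inter.2 ⟨hr, h⟩⟩
      have hrg : r ≠ g := fun h => hrG (h ▸ hg)
      have hpg : v.p r g ≤ 1 / 2 := by
        have h1 := hGdom g hg r hrG
        have h2 := hsum r g hrg
        linarith
      exact ⟨r, hr, g, hg, hgX, hpg⟩
  -- invariant for all iterates
  have hiter : ∀ n : ℕ, PInv G (Tcp^[n] v) := by
    intro n
    induction n with
    | zero => exact hinit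
    | succ n ih =>
      rw [Function.iterate_succ_apply']
      exact pinv_step G hGne _ ih
  obtain ⟨N, hN⟩ := hstar
  have hvstar : PInv G vstar := hN (max N 0) (le_max_left _ _) ▸ hiter (max N 0)
  obtain ⟨Q1, Q2, Q3, Q4, Q5⟩ := hvstar
  -- lower bound for nt outside G
  have hlow : ∀ y ∉ G, 1 / 2 < vstar.nt y := by
    intro y hy
    have h1 : (1:ℝ) / 2 < inf1 {b : ℝ | ∃ r ∈ G, ∃ s, s ∉ G ∧ b = v.p r s} := by
      apply lt_inf1 (finPset v G) (by norm_num)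
      rintro b ⟨r, hr, s, hs, rfl⟩
      exact hGdom r hr s hs
    have hfin : {a : ℝ | ∃ X : Finset I, X.Nonempty ∧ y ∉ X ∧
        a = inf1 {b : ℝ | ∃ r ∈ X, ∃ s, s ∉ X ∧ b = v.p r s}}.Finite := by
      apply fin_of_mem_range
        (fun X : Finset I => inf1 {b : ℝ | ∃ r ∈ X, ∃ s, s ∉ X ∧ b = v.p r s})
      rintro a ⟨X, _, _, rfl⟩; exact ⟨X, rfl⟩
    have h2 : (1:ℝ) / 2 < (Tcp v).nt y := by
      refine lt_of_lt_of_le h1 (le_trans (le_sup0 hfin ⟨G, hGne, hy, rfl⟩) ?_)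
      exact le_trans (le_max_right _ _) (le_max_right _ _)
    have hmono : ∀ n : ℕ, (Tcp^[n] v).nt y ≤ (Tcp^[n + 1] v).nt y := by
      intro n
      rw [Function.iterate_succ_apply']
      exact le_max_left _ _
    have hchain : (Tcp^[1] v).nt y ≤ (Tcp^[N + 1] v).nt y := by
      have := monotone_nat_of_le_succ hmono (show 1 ≤ N + 1 by omega)
      exact this
    rw [hN (N + 1) (by omega)] at hchain
    simpa using lt_of_lt_of_le h2 hchain
  refine ⟨hlow, Q3, Q1, ?_⟩
  intro x hx
  by_contra hxG
  have h1 := hlow x hxG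
  have h3 := Q1 x hxG
  linarith
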